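/- Assume the exactly transported particles stay inside the prescribed supports, i.e. F̄(Σ⁰_{h,k}) ⊆ Σ_{h,k} for every k ∈ ℤ^d. Then the approximate transport operator satisfies the uniform error bound ‖(T̄_h − T̄_ex) f⁰_h‖_{L^∞(ℝ^d)} ≤ c_w · L_φ · e_B(h) · Θ(h) · h^{−1} · ‖f⁰‖_{L^∞}. -/

import Mathlib

open scoped NNReal
open Set

/-- Grid node `x⁰_k := h k`. -/
noncomputable def node (d : ℕ) (h : ℝ) (k : Fin d → ℤ) : Fin d → ℝ :=
  fun i => h * (k i : ℝ)

/-- Particle shape function `φ⁰_{h,k}(x) := h^{-d} φ(h⁻¹ x - k)`. -/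
noncomputable def part (d : ℕ) (h : ℝ) (φ : (Fin d → ℝ) → ℝ)
    (k : Fin d → ℤ) (x : Fin d → ℝ) : ℝ :=
  (h ^ d)⁻¹ * φ (fun i => x i / h - (k i : ℝ))

/-- if the exactly transported particles stay inside the prescribed supports
`Σ_{h,k}`, then the approximate transport operator satisfies the uniform error bound
`‖(T̄_h − T̄_ex) f⁰_h‖_∞ ≤ c_w L_φ e_B(h) Θ(h) h⁻¹ ‖f⁰‖_∞`. -/
theorem approx_transport_uniform_error
    (d : ℕ) (hd : 1 ≤ d) (h : ℝ) (hh : 0 < h)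
    (φ : (Fin d → ℝ) → ℝ) (Lφ : ℝ≥0) (hφLip : LipschitzWith Lφ φ)
    (ρ0 : ℝ) (hρ0 : 0 < ρ0) (hφsupp : ∀ x, φ x ≠ 0 → ‖x‖ ≤ ρ0)
    (f0 : (Fin d → ℝ) → ℝ) (hf0 : BddAbove (Set.range fun x => |f0 x|))
    (cw : ℝ) (hcw : 0 < cw)
    (w : (Fin d → ℤ) → ℝ) (hw : ∀ k, |w k| ≤ cw * h ^ d * ⨆ y, |f0 y|)
    (F : (Fin d → ℝ) ≃ (Fin d → ℝ))
    (Bh : (Fin d → ℤ) → (Fin d → ℝ) → (Fin d → ℝ))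
    (Sh : (Fin d → ℤ) → Set (Fin d → ℝ))
    (Θ : ℕ)
    (hfin : ∀ x : Fin d → ℝ, {k : Fin d → ℤ | x ∈ Sh k}.Finite)
    (hΘ : ∀ x : Fin d → ℝ, ({k : Fin d → ℤ | x ∈ Sh k}).ncard ≤ Θ)
    (eB : ℝ) (heB0 : 0 ≤ eB)
    (heB : ∀ k, ∀ x ∈ Sh k, ‖Bh k x - F.symm x‖ ≤ eB)
    (hdom : ∀ k, F '' Function.support (part d h φ k) ⊆ Sh k) :
    ∀ x : Fin d → ℝ,
      |(∑' k : Fin d → ℤ, w k * (Sh k).indicator (fun y => part d h φ k (Bh k y)) x)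
          - ∑' k : Fin d → ℤ, w k * part d h φ k (F.symm x)|
        ≤ cw * (Lφ : ℝ) * eB * (Θ : ℝ) / h * ⨆ y, |f0 y| := by
  intro x
  have hdpos : (0:ℝ) < h ^ d := pow_pos hh d
  have hM0 : 0 ≤ ⨆ y, |f0 y| :=
    le_ciSup_of_le hf0 (fun _ => 0) (abs_nonneg _)
  set S := (hfin x).toFinset with hS
  have hb : ∀ k ∉ S, w k * part d h φ k (F.symm x) = 0 := by
    intro k hk
    simp only [hS, Set.Finite.mem_toFinset, Set.mem_setOf_eq] at hk
    by_cases hp : part d h φ k (F.symm x) = 0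
    · rw [hp]; ring
    · exact absurd (hdom k ⟨F.symm x, hp, F.apply_symm_apply x⟩) hk
  have ha : ∀ k ∉ S, w k * (Sh k).indicator (fun y => part d h φ k (Bh k y)) x = 0 := by
    intro k hk
    simp only [hS, Set.Finite.mem_toFinset, Set.mem_setOf_eq] at hk
    rw [Set.indicator_of_notMem hk]; ring
  rw [tsum_eq_sum ha, tsum_eq_sum hb, ← Finset.sum_sub_distrib]
  have key : ∀ k ∈ S,
      |w k * (Sh k).indicator (fun y => part d h φ k (Bh k y)) x
        - w k * part d h φ k (F.symm x)|
      ≤ cw * (Lφ : ℝ) * eB / h * ⨆ y, |f0 y| := by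
    intro k hk
    simp only [hS, Set.Finite.mem_toFinset, Set.mem_setOf_eq] at hk
    rw [Set.indicator_of_mem hk, ← mul_sub, abs_mul]
    have hdiff : |part d h φ k (Bh k x) - part d h φ k (F.symm x)|
        ≤ (h ^ d)⁻¹ * ((Lφ : ℝ) * (eB / h)) := by
      unfold part
      rw [← mul_sub, abs_mul, abs_inv, abs_pow, abs_of_pos hh]
      refine mul_le_mul_of_nonneg_left ?_ (by positivity)
      have hlip := hφLip.dist_le_mul
        (fun i => Bh k x i / h - (k i : ℝ)) (fun i => F.symm x i / h - (k i : ℝ))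
      rw [Real.dist_eq] at hlip
      refine hlip.trans (mul_le_mul_of_nonneg_left ?_ Lφ.coe_nonneg)
      have heq : (fun i => Bh k x i / h - (k i : ℝ)) - (fun i => F.symm x i / h - (k i : ℝ))
          = h⁻¹ • (Bh k x - F.symm x) := by
        funext i
        simp only [Pi.sub_apply, Pi.smul_apply, smul_eq_mul]
        field_simp
        ring
      rw [dist_eq_norm, heq, norm_smul, norm_inv, Real.norm_eq_abs, abs_of_pos hh]
      rw [div_eq_inv_mul]
      exact mul_le_mul_of_nonneg_left (heB k x hk) (by positivity)
    calc |w k| * |part d h φ k (Bh k x) - part d h φ k (F.symm x)|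
        ≤ (cw * h ^ d * ⨆ y, |f0 y|) * ((h ^ d)⁻¹ * ((Lφ : ℝ) * (eB / h))) := by
          exact mul_le_mul (hw k) hdiff (abs_nonneg _) (by positivity)
      _ = cw * (Lφ : ℝ) * eB / h * ⨆ y, |f0 y| := by
          field_simp
  have hcard : (S.card : ℝ) ≤ (Θ : ℝ) := by
    have := hΘ x
    rw [Set.ncard_eq_toFinset_card _ (hfin x)] at this
    exact_mod_cast this
  calc |∑ k ∈ S, (w k * (Sh k).indicator (fun y => part d h φ k (Bh k y)) x
          - w k * part d h φ k (F.symm x))|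
      ≤ ∑ k ∈ S, |w k * (Sh k).indicator (fun y => part d h φ k (Bh k y)) x
          - w k * part d h φ k (F.symm x)| := Finset.abs_sum_le_sum_abs _ _
    _ ≤ ∑ k ∈ S, (cw * (Lφ : ℝ) * eB / h * ⨆ y, |f0 y|) := Finset.sum_le_sum key
    _ = (S.card : ℝ) * (cw * (Lφ : ℝ) * eB / h * ⨆ y, |f0 y|) := by
          rw [Finset.sum_const, nsmul_eq_mul]
    _ ≤ (Θ : ℝ) * (cw * (Lφ : ℝ) * eB / h * ⨆ y, |f0 y|) := by
          exact mul_le_mul_of_nonneg_right hcard (by positivity)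
    _ = cw * (Lφ : ℝ) * eB * (Θ : ℝ) / h * ⨆ y, |f0 y| := by ring
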